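/- arXiv:1606.05719 — 4 statements merged into one kernel-verified Lean document; each statement's English description precedes it below -/
import Mathlib

section
/- For a passive linear quantum system, the unobservable subspace is determined by C and Ω alone: ⋂_{k=0}^{n-1} Ker(C A^k) = ⋂_{k=0}^{n-1} Ker(C Ω^k). -/
open Matrix Polynomial

lemma sum_mulVec' {a b : ℕ} {ι : Type*} (s : Finset ι) (f : ι → Matrix (Fin a) (Fin b) ℂ)
    (x : Fin b → ℂ) : (∑ i ∈ s, f i).mulVec x = ∑ i ∈ s, (f i).mulVec x :=
  map_sum (Matrix.mulVec.addMonoidHomLeft x) f s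

lemma mulVec_sum' {a b : ℕ} {ι : Type*} (s : Finset ι) (C : Matrix (Fin a) (Fin b) ℂ)
    (v : ι → Fin b → ℂ) : C.mulVec (∑ i ∈ s, v i) = ∑ i ∈ s, C.mulVec (v i) := by
  have h := map_sum C.mulVecLin v s
  simp only [Matrix.mulVecLin_apply] at h
  exact h

/-- Cayley–Hamilton: kernel conditions for `k < n` extend to all `k`. -/
lemma extend_ker (n m : ℕ) (hn : 0 < n)
    (M : Matrix (Fin n) (Fin n) ℂ) (C : Matrix (Fin m) (Fin n) ℂ) (x : Fin n → ℂ)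
    (h : ∀ k < n, C.mulVec ((M ^ k).mulVec x) = 0) :
    ∀ k, C.mulVec ((M ^ k).mulVec x) = 0 := by
  intro k
  induction k using Nat.strong_induction_on with
  | _ k ih =>
    rcases lt_or_ge k n with hk | hk
    · exact h k hk
    · set p := M.charpoly with hp
      have hdeg : p.natDegree = n := by
        have : Fintype.card (Fin n) = n := Fintype.card_fin n
        rw [hp, M.charpoly_natDegree_eq_dim, this]
      set q : ℂ[X] := p - X ^ n with hq
      have hqdeg : q.natDegree < n := by
        rcases eq_or_ne q 0 with h0 | h0
        · simpa [h0] using hn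
        · have hpd : p.degree = (n : ℕ) := by
            rw [Polynomial.degree_eq_natDegree M.charpoly_monic.ne_zero, hdeg]
          have hdq : q.degree < (n : ℕ) := by
            have := Polynomial.degree_sub_lt (p := p) (q := X ^ n)
              (by rw [hpd, degree_X_pow])
              (M.charpoly_monic.ne_zero)
              (by simp [hp, M.charpoly_monic.leadingCoeff])
            rwa [hpd] at this
          exact (Polynomial.natDegree_lt_iff_degree_lt h0).2 hdq
      have hMn : M ^ n = -∑ i ∈ Finset.range n, q.coeff i • M ^ i := by
        have h1 : aeval M p = 0 := M.aeval_self_charpoly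
        have h2 : aeval M q = ∑ i ∈ Finset.range n, q.coeff i • M ^ i :=
          aeval_eq_sum_range' hqdeg M
        have h3 : aeval M q = aeval M p - M ^ n := by
          simp [hq, map_sub]
        rw [h1, zero_sub] at h3
        rw [← h2, h3, neg_neg]
      have hk' : M ^ k = M ^ (k - n) * M ^ n := by
        rw [← pow_add]; congr 1; omega
      have hexp : C.mulVec ((M ^ (k - n) * M ^ n).mulVec x) =
          -∑ i ∈ Finset.range n,
            q.coeff i • C.mulVec ((M ^ (k - n + i)).mulVec x) := by
        rw [hMn, mul_neg, Matrix.mul_sum, neg_mulVec, Matrix.mulVec_neg]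
        congr 1
        rw [sum_mulVec', mulVec_sum']
        refine Finset.sum_congr rfl fun i _ => ?_
        rw [mul_smul_comm, ← pow_add, Matrix.smul_mulVec, Matrix.mulVec_smul]
      rw [hk', hexp]
      have : ∀ i ∈ Finset.range n,
          q.coeff i • C.mulVec ((M ^ (k - n + i)).mulVec x) = 0 := by
        intro i hi
        rw [ih (k - n + i) (by have := Finset.mem_range.mp hi; omega), smul_zero]
      rw [Finset.sum_congr rfl this, Finset.sum_const_zero, neg_zero]

/-- If all `C Ω^k x = 0`, then `A` acts like `-iΩ` on the orbit of `x`. -/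
lemma Apow_eq (n m : ℕ)
    (Ω : Matrix (Fin n) (Fin n) ℂ) (C : Matrix (Fin m) (Fin n) ℂ)
    (A : Matrix (Fin n) (Fin n) ℂ)
    (hA : A = (-Complex.I) • Ω - (1 / 2 : ℂ) • (Cᴴ * C))
    (x : Fin n → ℂ) (h : ∀ k, C.mulVec ((Ω ^ k).mulVec x) = 0) :
    ∀ k, (A ^ k).mulVec x = ((-Complex.I) ^ k) • (Ω ^ k).mulVec x := by
  intro k
  induction k with
  | zero => simp
  | succ k ih =>
    have hstep : (A ^ (k + 1)).mulVec x = A.mulVec ((A ^ k).mulVec x) := by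
      rw [Matrix.mulVec_mulVec, ← pow_succ']
    have hCC : (Cᴴ * C).mulVec ((Ω ^ k).mulVec x) = 0 := by
      rw [← Matrix.mulVec_mulVec, h k, Matrix.mulVec_zero]
    rw [hstep, ih, Matrix.mulVec_smul, hA, Matrix.sub_mulVec,
      Matrix.smul_mulVec, Matrix.smul_mulVec, hCC, smul_zero, sub_zero,
      Matrix.mulVec_mulVec, ← pow_succ', smul_smul, ← pow_succ]

/-- Forward direction: vanishing of `C A^k x` for all `k` gives `C Ω^k x = 0`. -/
lemma forward_aux (n m : ℕ)
    (Ω : Matrix (Fin n) (Fin n) ℂ) (C : Matrix (Fin m) (Fin n) ℂ)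
    (A : Matrix (Fin n) (Fin n) ℂ)
    (hA : A = (-Complex.I) • Ω - (1 / 2 : ℂ) • (Cᴴ * C))
    (x : Fin n → ℂ) (h : ∀ k, C.mulVec ((A ^ k).mulVec x) = 0) :
    ∀ k, C.mulVec ((Ω ^ k).mulVec x) = 0 ∧
      (A ^ k).mulVec x = ((-Complex.I) ^ k) • (Ω ^ k).mulVec x := by
  intro k
  induction k with
  | zero =>
    refine ⟨?_, by simp⟩
    simpa using h 0
  | succ k ih =>
    obtain ⟨hCk, hAk⟩ := ih
    have hCC : (Cᴴ * C).mulVec ((Ω ^ k).mulVec x) = 0 := by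
      rw [← Matrix.mulVec_mulVec, hCk, Matrix.mulVec_zero]
    have hAsucc : (A ^ (k + 1)).mulVec x =
        ((-Complex.I) ^ (k + 1)) • (Ω ^ (k + 1)).mulVec x := by
      have hstep : (A ^ (k + 1)).mulVec x = A.mulVec ((A ^ k).mulVec x) := by
        rw [Matrix.mulVec_mulVec, ← pow_succ']
      rw [hstep, hAk, Matrix.mulVec_smul, hA, Matrix.sub_mulVec,
        Matrix.smul_mulVec, Matrix.smul_mulVec, hCC, smul_zero, sub_zero,
        Matrix.mulVec_mulVec, ← pow_succ', smul_smul, ← pow_succ]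
    refine ⟨?_, hAsucc⟩
    have h0 := h (k + 1)
    rw [hAsucc, Matrix.mulVec_smul] at h0
    have hne : ((-Complex.I) ^ (k + 1)) ≠ 0 := by
      apply pow_ne_zero
      simp [Complex.I_ne_zero]
    exact (smul_eq_zero.mp h0).resolve_left hne

/-- For a passive linear quantum system with `A = -iΩ - (1/2)CᴴC` (`Ω` Hermitian),
the unobservable subspace is determined by `C` and `Ω` alone:
`⋂_{k<n} Ker(C Aᵏ) = ⋂_{k<n} Ker(C Ωᵏ)`. -/
theorem passive_unobservable_eq_ker_C_Omega
    (n m : ℕ) (hn : 0 < n) (hm : 0 < m)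
    (Ω : Matrix (Fin n) (Fin n) ℂ) (hΩ : Ω.IsHermitian)
    (C : Matrix (Fin m) (Fin n) ℂ)
    (A : Matrix (Fin n) (Fin n) ℂ)
    (hA : A = (-Complex.I) • Ω - (1 / 2 : ℂ) • (Cᴴ * C))
    (B : Matrix (Fin n) (Fin m) ℂ) (hB : B = -Cᴴ) :
    (⨅ k ∈ Finset.range n, LinearMap.ker ((C * A ^ k).mulVecLin)) =
      ⨅ k ∈ Finset.range n, LinearMap.ker ((C * Ω ^ k).mulVecLin) := by
  ext x
  simp only [Submodule.mem_iInf, LinearMap.mem_ker, Matrix.mulVecLin_apply,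
    ← Matrix.mulVec_mulVec, Finset.mem_range]
  constructor
  · intro h
    have hall : ∀ k, C.mulVec ((A ^ k).mulVec x) = 0 :=
      extend_ker n m hn A C x (fun k hk => h k hk)
    intro k hk
    exact (forward_aux n m Ω C A hA x hall k).1
  · intro h
    have hall : ∀ k, C.mulVec ((Ω ^ k).mulVec x) = 0 :=
      extend_ker n m hn Ω C x (fun k hk => h k hk)
    intro k hk
    rw [Apow_eq n m Ω C A hA x hall k, Matrix.mulVec_smul, hall k, smul_zero]
end

section
/- For a general linear quantum system, if the stacked vector [x₁; x₂] (with x₁, x₂ ∈ ℂ^n) belongs to R_cō := Im(C_G) ∩ Ker(O_G), then the vector [x₁ + conj(x₂); conj(x₁) + x₂] also belongs to R_cō. -/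
open Matrix

noncomputable section

/-- `J_k = [I 0; 0 -I]` acting on `ℂ^{2k} = ℂ^k ⊕ ℂ^k`. -/
def Jmat (k : ℕ) : Matrix (Fin k ⊕ Fin k) (Fin k ⊕ Fin k) ℂ :=
  Matrix.fromBlocks 1 0 0 (-1)

/-- Entrywise complex conjugation of a matrix. -/
def mconj {α β : Type} (M : Matrix α β ℂ) : Matrix α β ℂ :=
  M.map (starRingEnd ℂ)

/-- The doubled-up matrix `Δ(U,V) = [U V; conj V  conj U]`. -/
def doubledUp {k r : ℕ} (U V : Matrix (Fin k) (Fin r) ℂ) :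
    Matrix (Fin k ⊕ Fin k) (Fin r ⊕ Fin r) ℂ :=
  Matrix.fromBlocks U V (mconj V) (mconj U)

/-- The ♭-adjoint `X♭ = J_r Xᴴ J_k` of `X ∈ ℂ^{2k×2r}`. -/
def flat {k r : ℕ} (X : Matrix (Fin k ⊕ Fin k) (Fin r ⊕ Fin r) ℂ) :
    Matrix (Fin r ⊕ Fin r) (Fin k ⊕ Fin k) ℂ :=
  Jmat r * Xᴴ * Jmat k

/-- Orthogonal complement of a subspace of `ℂ^ι` w.r.t. the standard Hermitian
inner product `⟪y, x⟫ = (star y) ⬝ᵥ x`. -/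
def orthComp {ι : Type} [Fintype ι] (S : Submodule ℂ (ι → ℂ)) : Submodule ℂ (ι → ℂ) where
  carrier := {x | ∀ y ∈ S, star y ⬝ᵥ x = 0}
  add_mem' := by
    intro a b ha hb y hy
    simp only [Set.mem_setOf_eq] at *
    rw [dotProduct_add, ha y hy, hb y hy, add_zero]
  zero_mem' := by
    intro y hy
    simp
  smul_mem' := by
    intro c x hx y hy
    simp only [Set.mem_setOf_eq] at *
    rw [dotProduct_smul, hx y hy, smul_zero]

/-- The controllable subspace `Im(C_G) = ∑_{k<2n} Im(𝒜ᵏℬ)`. -/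
def ctrbSub (n m : ℕ) (𝒜 : Matrix (Fin n ⊕ Fin n) (Fin n ⊕ Fin n) ℂ)
    (ℬ : Matrix (Fin n ⊕ Fin n) (Fin m ⊕ Fin m) ℂ) : Submodule ℂ (Fin n ⊕ Fin n → ℂ) :=
  ⨆ k ∈ Finset.range (2 * n), LinearMap.range ((𝒜 ^ k * ℬ).mulVecLin)

/-- The unobservable subspace `Ker(O_G) = ⋂_{k<2n} Ker(𝒞𝒜ᵏ)`. -/
def unobsSub (n m : ℕ) (𝒜 : Matrix (Fin n ⊕ Fin n) (Fin n ⊕ Fin n) ℂ)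
    (𝒞 : Matrix (Fin m ⊕ Fin m) (Fin n ⊕ Fin n) ℂ) : Submodule ℂ (Fin n ⊕ Fin n → ℂ) :=
  ⨅ k ∈ Finset.range (2 * n), LinearMap.ker ((𝒞 * 𝒜 ^ k).mulVecLin)

/-- Block swap matrix. -/
def Smat (k : ℕ) : Matrix (Fin k ⊕ Fin k) (Fin k ⊕ Fin k) ℂ :=
  Matrix.fromBlocks 0 1 1 0

/-- The conjugate-swap map on vectors. -/
def Tmap {k : ℕ} (x : Fin k ⊕ Fin k → ℂ) : Fin k ⊕ Fin k → ℂ :=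
  (Smat k).mulVec (star x)

lemma mconj_mconj {α β : Type} (M : Matrix α β ℂ) : mconj (mconj M) = M := by
  ext i j; simp [mconj]

lemma mconj_mul {a b c : Type} [Fintype b] (M : Matrix a b ℂ) (N : Matrix b c ℂ) :
    mconj (M * N) = mconj M * mconj N :=
  Matrix.map_mul

lemma mconj_neg {a b : Type} (M : Matrix a b ℂ) : mconj (-M) = -mconj M := by
  ext i j; simp [mconj]

lemma mconj_sub {a b : Type} (M N : Matrix a b ℂ) : mconj (M - N) = mconj M - mconj N := by
  ext i j; simp [mconj]

lemma mconj_smul {a b : Type} (c : ℂ) (M : Matrix a b ℂ) :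
    mconj (c • M) = (starRingEnd ℂ c) • mconj M := by
  ext i j; simp [mconj]

lemma mconj_one {k : Type} [DecidableEq k] : mconj (1 : Matrix k k ℂ) = 1 := by
  ext i j; by_cases h : i = j <;> simp [mconj, Matrix.one_apply, h]

/-- The key "doubled-up" commutation property. -/
def isDU {k r : ℕ} (M : Matrix (Fin k ⊕ Fin k) (Fin r ⊕ Fin r) ℂ) : Prop :=
  M * Smat r = Smat k * mconj M

lemma isDU_doubledUp {k r : ℕ} (U V : Matrix (Fin k) (Fin r) ℂ) :
    isDU (doubledUp U V) := by
  simp only [isDU, doubledUp, Smat, mconj, Matrix.fromBlocks_map,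
    Matrix.fromBlocks_multiply]
  simp only [Matrix.mul_zero, Matrix.mul_one, Matrix.zero_mul, Matrix.one_mul,
    zero_add, add_zero]
  have h : ∀ (W : Matrix (Fin k) (Fin r) ℂ), (W.map (starRingEnd ℂ)).map (starRingEnd ℂ) = W := by
    intro W; ext i j; simp
  rw [h U, h V]

lemma isDU_mul {k r s : ℕ} {M : Matrix (Fin k ⊕ Fin k) (Fin r ⊕ Fin r) ℂ}
    {N : Matrix (Fin r ⊕ Fin r) (Fin s ⊕ Fin s) ℂ} (hM : isDU M) (hN : isDU N) :
    isDU (M * N) := by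
  unfold isDU at *
  rw [mconj_mul, Matrix.mul_assoc, hN, ← Matrix.mul_assoc, hM, Matrix.mul_assoc]

lemma isDU_one {k : ℕ} : isDU (1 : Matrix (Fin k ⊕ Fin k) (Fin k ⊕ Fin k) ℂ) := by
  unfold isDU
  rw [mconj_one, Matrix.one_mul, Matrix.mul_one]

lemma isDU_pow {k : ℕ} {M : Matrix (Fin k ⊕ Fin k) (Fin k ⊕ Fin k) ℂ} (hM : isDU M)
    (j : ℕ) : isDU (M ^ j) := by
  induction j with
  | zero => simpa using isDU_one
  | succ j ih => rw [pow_succ]; exact isDU_mul ih hM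

lemma isDU_neg {k r : ℕ} {M : Matrix (Fin k ⊕ Fin k) (Fin r ⊕ Fin r) ℂ} (hM : isDU M) :
    isDU (-M) := by
  unfold isDU at *
  rw [mconj_neg, Matrix.neg_mul, Matrix.mul_neg, hM]

lemma isDU_sub {k r : ℕ} {M N : Matrix (Fin k ⊕ Fin k) (Fin r ⊕ Fin r) ℂ}
    (hM : isDU M) (hN : isDU N) : isDU (M - N) := by
  unfold isDU at *
  rw [mconj_sub, Matrix.sub_mul, Matrix.mul_sub, hM, hN]

lemma isDU_smul_real {k r : ℕ} {M : Matrix (Fin k ⊕ Fin k) (Fin r ⊕ Fin r) ℂ}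
    (hM : isDU M) {c : ℂ} (hc : starRingEnd ℂ c = c) : isDU (c • M) := by
  unfold isDU at *
  rw [mconj_smul, hc, Matrix.smul_mul, Matrix.mul_smul, hM]

lemma flat_doubledUp {k r : ℕ} (U V : Matrix (Fin k) (Fin r) ℂ) :
    flat (doubledUp U V) = doubledUp Uᴴ (-Vᵀ) := by
  simp only [flat, doubledUp, Jmat, mconj, Matrix.fromBlocks_conjTranspose,
    Matrix.fromBlocks_multiply, Matrix.fromBlocks_map]
  have h1 : (U.map (starRingEnd ℂ))ᴴ = Uᵀ := by ext i j; simp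
  have h2 : (V.map (starRingEnd ℂ))ᴴ = Vᵀ := by ext i j; simp
  have h3 : (-Vᵀ).map (starRingEnd ℂ) = -Vᴴ := by ext i j; simp [Matrix.conjTranspose_apply]
  have h4 : Uᴴ.map (starRingEnd ℂ) = Uᵀ := by ext i j; simp [Matrix.conjTranspose_apply]
  rw [h1, h2, h3, h4]
  congr 1 <;> first
    | (rw [Matrix.mul_one]; ring_nf; simp [Matrix.mul_neg, Matrix.neg_mul, Matrix.one_mul])
    | skip
  all_goals
    simp [Matrix.mul_neg, Matrix.neg_mul, Matrix.mul_one, Matrix.one_mul, Matrix.mul_zero,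
      Matrix.zero_mul]

lemma negI_smul_J_mul_doubledUp {k : ℕ} (U V : Matrix (Fin k) (Fin k) ℂ) :
    (-Complex.I) • (Jmat k * doubledUp U V)
      = doubledUp ((-Complex.I) • U) ((-Complex.I) • V) := by
  simp only [Jmat, doubledUp, mconj, Matrix.fromBlocks_multiply, Matrix.fromBlocks_smul]
  have h1 : ((-Complex.I) • U).map (starRingEnd ℂ) = Complex.I • U.map (starRingEnd ℂ) := by
    ext i j; simp
  have h2 : ((-Complex.I) • V).map (starRingEnd ℂ) = Complex.I • V.map (starRingEnd ℂ) := by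
    ext i j; simp
  rw [h1, h2]
  congr 1 <;>
    simp [Matrix.neg_mul, Matrix.one_mul, Matrix.mul_zero, Matrix.zero_mul] <;>
    ext i j <;> simp

lemma star_mulVec_eq {a b : Type} [Fintype b] (M : Matrix a b ℂ) (u : b → ℂ) :
    star (M.mulVec u) = (mconj M).mulVec (star u) := by
  ext i
  simp [Matrix.mulVec, dotProduct, mconj, map_sum]

lemma mulVec_Tmap {k r : ℕ} {M : Matrix (Fin k ⊕ Fin k) (Fin r ⊕ Fin r) ℂ}
    (h : isDU M) (u : Fin r ⊕ Fin r → ℂ) :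
    M.mulVec (Tmap u) = Tmap (M.mulVec u) := by
  unfold Tmap
  rw [Matrix.mulVec_mulVec, h, ← Matrix.mulVec_mulVec, ← star_mulVec_eq]

lemma Tmap_add {k : ℕ} (x y : Fin k ⊕ Fin k → ℂ) : Tmap (x + y) = Tmap x + Tmap y := by
  unfold Tmap
  rw [star_add, Matrix.mulVec_add]

lemma Tmap_zero {k : ℕ} : Tmap (0 : Fin k ⊕ Fin k → ℂ) = 0 := by
  unfold Tmap
  simp

lemma Tmap_smul {k : ℕ} (c : ℂ) (x : Fin k ⊕ Fin k → ℂ) :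
    Tmap (c • x) = (starRingEnd ℂ c) • Tmap x := by
  unfold Tmap
  rw [star_smul, Matrix.mulVec_smul]
  rfl

lemma Tmap_sumElim {k : ℕ} (a b : Fin k → ℂ) :
    Tmap (Sum.elim a b) = Sum.elim (star b) (star a) := by
  funext i
  cases i with
  | inl i =>
      simp [Tmap, Smat, Matrix.mulVec, dotProduct, Fintype.sum_sum_type,
        Matrix.fromBlocks, Matrix.one_apply, Finset.sum_ite_eq]
  | inr i =>
      simp [Tmap, Smat, Matrix.mulVec, dotProduct, Fintype.sum_sum_type,
        Matrix.fromBlocks, Matrix.one_apply, Finset.sum_ite_eq]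

lemma Tmap_mem_ctrb {n m : ℕ} {𝒜 : Matrix (Fin n ⊕ Fin n) (Fin n ⊕ Fin n) ℂ}
    {ℬ : Matrix (Fin n ⊕ Fin n) (Fin m ⊕ Fin m) ℂ} (hA : isDU 𝒜) (hB : isDU ℬ)
    {x : Fin n ⊕ Fin n → ℂ} (hx : x ∈ ctrbSub n m 𝒜 ℬ) :
    Tmap x ∈ ctrbSub n m 𝒜 ℬ := by
  let S' : Submodule ℂ (Fin n ⊕ Fin n → ℂ) :=
    { carrier := {y | Tmap y ∈ ctrbSub n m 𝒜 ℬ}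
      add_mem' := by
        intro a b ha hb
        simp only [Set.mem_setOf_eq] at *
        rw [Tmap_add]; exact Submodule.add_mem _ ha hb
      zero_mem' := by
        simp only [Set.mem_setOf_eq, Tmap_zero]; exact Submodule.zero_mem _
      smul_mem' := by
        intro c y hy
        simp only [Set.mem_setOf_eq] at *
        rw [Tmap_smul]; exact Submodule.smul_mem _ _ hy }
  have hle : ctrbSub n m 𝒜 ℬ ≤ S' := by
    refine iSup₂_le fun k hk => ?_
    rintro y ⟨u, rfl⟩
    show Tmap ((𝒜 ^ k * ℬ).mulVecLin u) ∈ ctrbSub n m 𝒜 ℬ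
    have hDU : isDU (𝒜 ^ k * ℬ) := isDU_mul (isDU_pow hA k) hB
    have : Tmap ((𝒜 ^ k * ℬ).mulVecLin u) = (𝒜 ^ k * ℬ).mulVecLin (Tmap u) := by
      simp only [Matrix.mulVecLin_apply]
      rw [mulVec_Tmap hDU]
    rw [this]
    refine Submodule.mem_iSup_of_mem k (Submodule.mem_iSup_of_mem hk ?_)
    exact LinearMap.mem_range_self _ _
  exact hle hx

lemma Tmap_mem_unobs {n m : ℕ} {𝒜 : Matrix (Fin n ⊕ Fin n) (Fin n ⊕ Fin n) ℂ}
    {𝒞 : Matrix (Fin m ⊕ Fin m) (Fin n ⊕ Fin n) ℂ} (hA : isDU 𝒜) (hC : isDU 𝒞)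
    {x : Fin n ⊕ Fin n → ℂ} (hx : x ∈ unobsSub n m 𝒜 𝒞) :
    Tmap x ∈ unobsSub n m 𝒜 𝒞 := by
  simp only [unobsSub, Submodule.mem_iInf, LinearMap.mem_ker,
    Matrix.mulVecLin_apply] at hx ⊢
  intro k hk
  have hDU : isDU (𝒞 * 𝒜 ^ k) := isDU_mul hC (isDU_pow hA k)
  rw [mulVec_Tmap hDU, hx k hk, Tmap_zero]

/-- **Lemma 5.** For a general linear quantum system, if `[x₁; x₂] ∈ R_cō = Im(C_G) ∩ Ker(O_G)`
then `[x₁ + conj x₂; conj x₁ + x₂] ∈ R_cō`. -/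
theorem Rcnoo_closed_under_conj_swap
    (n m : ℕ) (hn : 0 < n) (hm : 0 < m)
    (Ωm Ωp : Matrix (Fin n) (Fin n) ℂ) (Cm Cp : Matrix (Fin m) (Fin n) ℂ)
    (Ω : Matrix (Fin n ⊕ Fin n) (Fin n ⊕ Fin n) ℂ) (hΩ : Ω = doubledUp Ωm Ωp)
    (hΩH : Ω.IsHermitian)
    (𝒞 : Matrix (Fin m ⊕ Fin m) (Fin n ⊕ Fin n) ℂ) (h𝒞 : 𝒞 = doubledUp Cm Cp)
    (𝒜 : Matrix (Fin n ⊕ Fin n) (Fin n ⊕ Fin n) ℂ)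
    (h𝒜 : 𝒜 = (-Complex.I) • (Jmat n * Ω) - (1 / 2 : ℂ) • (flat 𝒞 * 𝒞))
    (ℬ : Matrix (Fin n ⊕ Fin n) (Fin m ⊕ Fin m) ℂ) (hℬ : ℬ = -flat 𝒞)
    (x₁ x₂ : Fin n → ℂ)
    (hx : Sum.elim x₁ x₂ ∈ ctrbSub n m 𝒜 ℬ ⊓ unobsSub n m 𝒜 𝒞) :
    Sum.elim (x₁ + star x₂) (star x₁ + x₂) ∈ ctrbSub n m 𝒜 ℬ ⊓ unobsSub n m 𝒜 𝒞 := by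
  have hC : isDU 𝒞 := h𝒞 ▸ isDU_doubledUp Cm Cp
  have hflatC : isDU (flat 𝒞) := by
    rw [h𝒞, flat_doubledUp]; exact isDU_doubledUp _ _
  have hB : isDU ℬ := hℬ ▸ isDU_neg hflatC
  have hA : isDU 𝒜 := by
    rw [h𝒜, hΩ]
    refine isDU_sub ?_ (isDU_smul_real (isDU_mul hflatC hC) (by rw [map_div₀, _root_.map_one, Complex.conj_ofNat]))
    rw [negI_smul_J_mul_doubledUp]
    exact isDU_doubledUp _ _
  obtain ⟨hc, ho⟩ := hx
  have key : Sum.elim (x₁ + star x₂) (star x₁ + x₂)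
      = Sum.elim x₁ x₂ + Tmap (Sum.elim x₁ x₂) := by
    rw [Tmap_sumElim]
    funext i
    cases i <;> simp [add_comm]
  rw [key]
  exact ⟨Submodule.add_mem _ hc (Tmap_mem_ctrb hA hB hc),
         Submodule.add_mem _ ho (Tmap_mem_unobs hA hC ho)⟩

end
end

section
/- For a general linear quantum system there exist nonnegative integers n_a, n_b and matrices X ∈ ℂ^{n×n_a}, Y ∈ ℂ^{n×n_b} with Xᴴ X = I_{n_a}, Yᴴ Y = I_{n_b} and Xᴴ Y = 0, such that the column space of T_cō := (1/√2)·[X Y; conj(X) -conj(Y)] ∈ ℂ^{2n×(n_a+n_b)} equals R_cō := Im(C_G) ∩ Ker(O_G), and the column space of J_n T_cō = (1/√2)·[X Y; -conj(X) conj(Y)] equals R_c̄o := Ker(C_Gᴴ) ∩ Im(O_Gᴴ). -/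
open Matrix

noncomputable section

/-! ### Auxiliary machinery -/

namespace QLS
set_option linter.unusedSectionVars false

/-! #### Signs, `Jmat`, and the doubled-up structure -/

def sgn {α : Type} : α ⊕ α → ℂ := Sum.elim (fun _ => 1) (fun _ => -1)

lemma sgn_sw {α : Type} (i : α ⊕ α) : sgn (Sum.swap i) = - sgn i := by
  cases i <;> simp [sgn]

lemma sgn_mul_self {α : Type} (i : α ⊕ α) : sgn i * sgn i = 1 := by
  cases i <;> simp [sgn]

lemma conj_sgn {α : Type} (i : α ⊕ α) : starRingEnd ℂ (sgn i) = sgn i := by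
  cases i <;> simp [sgn]

lemma Jmat_eq_diagonal (k : ℕ) : Jmat k = Matrix.diagonal sgn := by
  ext i j
  cases i <;> cases j <;>
    simp [Jmat, Matrix.fromBlocks, Matrix.diagonal, sgn, Matrix.one_apply,
      Sum.elim_inl, Sum.elim_inr, eq_comm] <;>
  aesop

lemma Jmat_mul_Jmat (k : ℕ) : Jmat k * Jmat k = 1 := by
  rw [Jmat_eq_diagonal, Matrix.diagonal_mul_diagonal]
  ext i j
  rcases eq_or_ne i j with h | h
  · subst h; simp [Matrix.diagonal_apply_eq, Matrix.one_apply_eq, sgn_mul_self]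
  · simp [Matrix.diagonal_apply_ne _ h, Matrix.one_apply_ne h]

lemma Jmat_conjTranspose (k : ℕ) : (Jmat k)ᴴ = Jmat k := by
  have h : (star sgn : Fin k ⊕ Fin k → ℂ) = sgn := funext fun i => conj_sgn i
  rw [Jmat_eq_diagonal, Matrix.diagonal_conjTranspose, h]

lemma Jmat_mulVec {k : ℕ} (x : Fin k ⊕ Fin k → ℂ) (i : Fin k ⊕ Fin k) :
    (Jmat k *ᵥ x) i = sgn i * x i := by
  rw [Jmat_eq_diagonal, Matrix.mulVec_diagonal]

/-- The antilinear involution whose fixed points are "doubled-up" vectors. -/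
def sig {α : Type} (x : α ⊕ α → ℂ) : α ⊕ α → ℂ := fun i => starRingEnd ℂ (x (Sum.swap i))

lemma sig_sig {α : Type} (x : α ⊕ α → ℂ) : sig (sig x) = x := by
  funext i; simp [sig]

lemma sig_add {α : Type} (x y : α ⊕ α → ℂ) : sig (x + y) = sig x + sig y := by
  funext i; simp [sig]

lemma sig_smul {α : Type} (c : ℂ) (x : α ⊕ α → ℂ) :
    sig (c • x) = (starRingEnd ℂ c) • sig x := by
  funext i; simp [sig]

lemma sig_zero {α : Type} : sig (0 : α ⊕ α → ℂ) = 0 := by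
  funext i; simp [sig]

lemma sig_sub {α : Type} (x y : α ⊕ α → ℂ) : sig (x - y) = sig x - sig y := by
  funext i; simp [sig]

/-- Doubled-up predicate on matrices. -/
def DU {α β : Type} (M : Matrix (α ⊕ α) (β ⊕ β) ℂ) : Prop :=
  ∀ i j, M (Sum.swap i) (Sum.swap j) = starRingEnd ℂ (M i j)

lemma DU.mulVec {α β : Type} [Fintype β] {M : Matrix (α ⊕ α) (β ⊕ β) ℂ} (hM : DU M)
    (x : β ⊕ β → ℂ) : sig (M *ᵥ x) = M *ᵥ (sig x) := by
  funext i
  simp only [sig, Matrix.mulVec, dotProduct, map_sum, _root_.map_mul]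
  rw [← Equiv.sum_comp (Equiv.sumComm β β)]
  refine Finset.sum_congr rfl fun j _ => ?_
  have : ((Equiv.sumComm β β) j) = Sum.swap j := rfl
  rw [this]
  rw [hM i j]
  simp

lemma DU.mul {α β γ : Type} [Fintype β] {M : Matrix (α ⊕ α) (β ⊕ β) ℂ}
    {N : Matrix (β ⊕ β) (γ ⊕ γ) ℂ} (hM : DU M) (hN : DU N) : DU (M * N) := by
  intro i j
  simp only [Matrix.mul_apply, map_sum, _root_.map_mul]
  rw [← Equiv.sum_comp (Equiv.sumComm β β)]
  exact Finset.sum_congr rfl fun k _ => by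
    have : ((Equiv.sumComm β β) k) = Sum.swap k := rfl
    rw [this, hM i k, hN k j]

lemma DU.add {α β : Type} {M N : Matrix (α ⊕ α) (β ⊕ β) ℂ} (hM : DU M) (hN : DU N) :
    DU (M + N) := fun i j => by simp [Matrix.add_apply, hM i j, hN i j]

lemma DU.neg {α β : Type} {M : Matrix (α ⊕ α) (β ⊕ β) ℂ} (hM : DU M) : DU (-M) :=
  fun i j => by simp [Matrix.neg_apply, hM i j]

lemma DU.sub {α β : Type} {M N : Matrix (α ⊕ α) (β ⊕ β) ℂ} (hM : DU M) (hN : DU N) :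
    DU (M - N) := by
  rw [sub_eq_add_neg]; exact hM.add hN.neg

lemma DU.smul_real {α β : Type} {M : Matrix (α ⊕ α) (β ⊕ β) ℂ} (hM : DU M)
    {c : ℂ} (hc : starRingEnd ℂ c = c) : DU (c • M) := fun i j => by
  simp [Matrix.smul_apply, hM i j, smul_eq_mul, hc]

lemma DU.conjTranspose {α β : Type} {M : Matrix (α ⊕ α) (β ⊕ β) ℂ} (hM : DU M) :
    DU (Mᴴ) := by
  intro i j
  simp only [Matrix.conjTranspose_apply]
  rw [hM j i]
  simp

lemma DU.pow {α : Type} [Fintype α] [DecidableEq α] {M : Matrix (α ⊕ α) (α ⊕ α) ℂ}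
    (hM : DU M) (k : ℕ) : DU (M ^ k) := by
  induction k with
  | zero =>
    intro i j
    simp only [pow_zero]
    have hinj : Function.Injective (Sum.swap : α ⊕ α → α ⊕ α) :=
      Function.LeftInverse.injective Sum.swap_swap
    by_cases h : i = j
    · simp [Matrix.one_apply, h]
    · simp [Matrix.one_apply, h, hinj.ne h]
  | succ k ih =>
    rw [pow_succ]
    exact ih.mul hM

lemma DU_doubledUp {k r : ℕ} (U V : Matrix (Fin k) (Fin r) ℂ) : DU (doubledUp U V) := by
  intro i j
  cases i <;> cases j <;> simp [doubledUp, mconj, Matrix.fromBlocks, Sum.swap]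

lemma DU.J_mul_mul_J {k r : ℕ} {M : Matrix (Fin k ⊕ Fin k) (Fin r ⊕ Fin r) ℂ}
    (hM : DU M) : DU (Jmat k * M * Jmat r) := by
  intro i j
  rw [Jmat_eq_diagonal, Jmat_eq_diagonal]
  simp only [Matrix.diagonal_mul, Matrix.mul_diagonal]
  rw [sgn_sw, sgn_sw, hM i j]
  simp only [_root_.map_mul, conj_sgn]
  ring

lemma DU.flat' {k r : ℕ} {X : Matrix (Fin k ⊕ Fin k) (Fin r ⊕ Fin r) ℂ} (hX : DU X) :
    DU (flat X) := by
  have h : flat X = Jmat r * Xᴴ * Jmat k := rfl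
  rw [h]
  exact hX.conjTranspose.J_mul_mul_J

lemma DU.negI_smul_J_mul {k r : ℕ} {M : Matrix (Fin k ⊕ Fin k) (Fin r ⊕ Fin r) ℂ}
    (hM : DU M) : DU ((-Complex.I) • (Jmat k * M)) := by
  intro i j
  rw [Jmat_eq_diagonal]
  simp only [Matrix.smul_apply, Matrix.diagonal_mul, smul_eq_mul]
  rw [sgn_sw, hM i j]
  simp only [_root_.map_mul, conj_sgn, map_neg, Complex.conj_I]
  ring

/-! #### `orthComp` machinery -/

variable {ι κ : Type} [Fintype ι] [DecidableEq ι] [Fintype κ] [DecidableEq κ]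

lemma star_dot_self_eq_zero {v : ι → ℂ} (h : star v ⬝ᵥ v = 0) : v = 0 := by
  have hsum : ∑ j, Complex.normSq (v j) = 0 := by
    have h2 := congrArg Complex.re h
    simp only [dotProduct, Pi.star_apply, Complex.zero_re, Complex.re_sum] at h2
    rw [← h2]
    refine Finset.sum_congr rfl fun j _ => ?_
    rw [show star (v j) * v j = ((Complex.normSq (v j) : ℝ) : ℂ) by
      rw [mul_comm]; exact Complex.mul_conj (v j)]
    simp
  funext j
  have := (Finset.sum_eq_zero_iff_of_nonneg
    (fun i _ => Complex.normSq_nonneg (v i))).mp hsum j (Finset.mem_univ j)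
  simpa using Complex.normSq_eq_zero.mp this

lemma mem_orthComp {S : Submodule ℂ (ι → ℂ)} {x : ι → ℂ} :
    x ∈ orthComp S ↔ ∀ y ∈ S, star y ⬝ᵥ x = 0 := Iff.rfl

/-- The submodule of `y` with `star y ⬝ᵥ x = 0`. -/
def dotZero (x : ι → ℂ) : Submodule ℂ (ι → ℂ) where
  carrier := {y | star y ⬝ᵥ x = 0}
  add_mem' := by
    intro a b ha hb
    simp only [Set.mem_setOf_eq] at *
    rw [star_add, add_dotProduct, ha, hb, add_zero]
  zero_mem' := by simp
  smul_mem' := by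
    intro c y hy
    simp only [Set.mem_setOf_eq] at *
    rw [star_smul, smul_dotProduct, hy, smul_zero]

lemma mem_orthComp_iff_le {S : Submodule ℂ (ι → ℂ)} {x : ι → ℂ} :
    x ∈ orthComp S ↔ S ≤ dotZero x := Iff.rfl

lemma orthComp_mono {S T : Submodule ℂ (ι → ℂ)} (h : S ≤ T) : orthComp T ≤ orthComp S :=
  fun _ hx y hy => hx y (h hy)

lemma orthComp_biSup {N : ℕ} (P : ℕ → Submodule ℂ (ι → ℂ)) :
    orthComp (⨆ k ∈ Finset.range N, P k) = ⨅ k ∈ Finset.range N, orthComp (P k) := by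
  apply le_antisymm
  · exact le_iInf₂ fun k hk => orthComp_mono (le_iSup₂ (f := fun k _ => P k) k hk)
  · intro x hx
    rw [mem_orthComp_iff_le]
    refine iSup₂_le fun k hk => ?_
    exact (Submodule.mem_iInf _).mp ((Submodule.mem_iInf _).mp hx k) hk

lemma orthComp_range (M : Matrix ι κ ℂ) :
    orthComp (LinearMap.range M.mulVecLin) = LinearMap.ker (Mᴴ.mulVecLin) := by
  ext x
  rw [mem_orthComp, LinearMap.mem_ker]
  constructor
  · intro h
    have h2 : ∀ v : κ → ℂ, star v ⬝ᵥ (Mᴴ *ᵥ x) = 0 := by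
      intro v
      have := h (M *ᵥ v) ⟨v, rfl⟩
      rwa [Matrix.star_mulVec, ← Matrix.dotProduct_mulVec] at this
    exact star_dot_self_eq_zero (h2 (Mᴴ *ᵥ x))
  · intro h y hy
    obtain ⟨v, rfl⟩ := hy
    show star (M *ᵥ v) ⬝ᵥ x = 0
    rw [Matrix.star_mulVec, ← Matrix.dotProduct_mulVec]
    have hx : Mᴴ *ᵥ x = 0 := h
    rw [hx, dotProduct_zero]

abbrev EucC (ι : Type) [Fintype ι] := PiLp 2 (fun _ : ι => ℂ)

def LC {ι : Type} [Fintype ι] : (ι → ℂ) ≃ₗ[ℂ] EucC ι :=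
  (WithLp.linearEquiv 2 ℂ (ι → ℂ)).symm

lemma inner_LC (y x : ι → ℂ) : (inner ℂ (LC y) (LC x) : ℂ) = star y ⬝ᵥ x := by
  rw [PiLp.inner_apply, dotProduct]
  refine Finset.sum_congr rfl fun i _ => ?_
  rw [RCLike.inner_apply']
  rfl

lemma map_LC_orthComp (S : Submodule ℂ (ι → ℂ)) :
    Submodule.map (LC (ι := ι) : (ι → ℂ) →ₗ[ℂ] EucC ι) (orthComp S) = (Submodule.map (LC (ι := ι) : (ι → ℂ) →ₗ[ℂ] EucC ι) S)ᗮ := by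
  ext x
  rw [Submodule.mem_orthogonal]
  constructor
  · rintro ⟨z, hz, rfl⟩ u hu
    obtain ⟨y, hy, rfl⟩ := hu
    rw [show inner ℂ ((LC (ι := ι) : (ι → ℂ) →ₗ[ℂ] EucC ι) y) ((LC (ι := ι) : (ι → ℂ) →ₗ[ℂ] EucC ι) z) = star y ⬝ᵥ z from inner_LC y z]
    exact hz y hy
  · intro h
    refine ⟨(LC (ι := ι)).symm x, ?_, (LC (ι := ι)).apply_symm_apply x⟩
    intro y hy
    have := h (LC y) ⟨y, hy, rfl⟩
    rwa [show x = LC ((LC (ι := ι)).symm x) from ((LC (ι := ι)).apply_symm_apply x).symm,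
      inner_LC] at this

lemma orthComp_orthComp (S : Submodule ℂ (ι → ℂ)) : orthComp (orthComp S) = S := by
  have h := map_LC_orthComp (ι := ι) (orthComp S)
  rw [map_LC_orthComp S, Submodule.orthogonal_orthogonal] at h
  exact Submodule.map_injective_of_injective (LC (ι := ι)).injective h

/-! #### Involution maps and kernels -/

lemma mem_map_invol {H : Matrix ι ι ℂ} (hH : H * H = 1) {S : Submodule ℂ (ι → ℂ)}
    {x : ι → ℂ} : x ∈ Submodule.map H.mulVecLin S ↔ H *ᵥ x ∈ S := by
  constructor
  · rintro ⟨y, hy, rfl⟩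
    show H *ᵥ (H *ᵥ y) ∈ S
    rw [Matrix.mulVec_mulVec, hH, Matrix.one_mulVec]
    exact hy
  · intro h
    refine ⟨H *ᵥ x, h, ?_⟩
    show H *ᵥ (H *ᵥ x) = x
    rw [Matrix.mulVec_mulVec, hH, Matrix.one_mulVec]

lemma map_invol_map {H : Matrix ι ι ℂ} (hH : H * H = 1) (S : Submodule ℂ (ι → ℂ)) :
    Submodule.map H.mulVecLin (Submodule.map H.mulVecLin S) = S := by
  ext x
  rw [mem_map_invol hH, mem_map_invol hH, Matrix.mulVec_mulVec, hH, Matrix.one_mulVec]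

lemma map_invol_inf {H : Matrix ι ι ℂ} (hH : H * H = 1) (S T : Submodule ℂ (ι → ℂ)) :
    Submodule.map H.mulVecLin (S ⊓ T)
      = Submodule.map H.mulVecLin S ⊓ Submodule.map H.mulVecLin T := by
  ext x
  simp only [Submodule.mem_inf, mem_map_invol hH]

lemma orthComp_map_invol {H : Matrix ι ι ℂ} (hHH : Hᴴ = H) (hH : H * H = 1)
    (S : Submodule ℂ (ι → ℂ)) :
    orthComp (Submodule.map H.mulVecLin S) = Submodule.map H.mulVecLin (orthComp S) := by
  have key : ∀ (y x : ι → ℂ), star (H *ᵥ y) ⬝ᵥ x = star y ⬝ᵥ (H *ᵥ x) := by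
    intro y x
    rw [Matrix.star_mulVec, ← Matrix.dotProduct_mulVec, hHH]
  ext x
  rw [mem_map_invol hH, mem_orthComp, mem_orthComp]
  constructor
  · intro h y hy
    have := h (H *ᵥ y) ⟨y, hy, rfl⟩
    rwa [key] at this
  · rintro h y ⟨z, hz, rfl⟩
    show star (H *ᵥ z) ⬝ᵥ x = 0
    rw [key]
    exact h z hz

lemma ker_sandwich {E : Matrix κ κ ℂ} (hE : E * E = 1) {H : Matrix ι ι ℂ} (hH : H * H = 1)
    (M : Matrix κ ι ℂ) :
    LinearMap.ker ((-(E * M * H)).mulVecLin)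
      = Submodule.map H.mulVecLin (LinearMap.ker M.mulVecLin) := by
  ext x
  rw [mem_map_invol hH, LinearMap.mem_ker, LinearMap.mem_ker]
  show -(E * M * H) *ᵥ x = 0 ↔ M *ᵥ (H *ᵥ x) = 0
  rw [Matrix.neg_mulVec, neg_eq_zero, Matrix.mulVec_mulVec]
  constructor
  · intro h
    have : E *ᵥ ((E * M * H) *ᵥ x) = E *ᵥ 0 := congrArg _ h
    rwa [Matrix.mulVec_mulVec, Matrix.mulVec_zero, show E * (E * M * H) = M * H by
      rw [← Matrix.mul_assoc, ← Matrix.mul_assoc, hE, Matrix.one_mul]] at this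
  · intro h
    rw [Matrix.mul_assoc, ← Matrix.mulVec_mulVec, h, Matrix.mulVec_zero]

lemma pow_conj_invol {J M : Matrix ι ι ℂ} (hJ : J * J = 1) (k : ℕ) :
    (J * M * J) ^ k = J * M ^ k * J := by
  induction k with
  | zero => rw [pow_zero, pow_zero, Matrix.mul_one, hJ]
  | succ k ih =>
    rw [pow_succ, ih, pow_succ]
    calc J * M ^ k * J * (J * M * J)
        = J * M ^ k * ((J * J) * (M * J)) := by simp only [Matrix.mul_assoc]
      _ = J * M ^ k * (M * J) := by rw [hJ, Matrix.one_mul]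
      _ = J * (M ^ k * M) * J := by simp only [Matrix.mul_assoc]

lemma ker_swap_aux {N : ℕ} {A A' : Matrix ι ι ℂ} {C : Matrix κ ι ℂ} {D : Matrix ι κ ℂ}
    (hA' : A' = -A + D * C) (x : ι → ℂ) (hx : ∀ k < N, (C * A ^ k) *ᵥ x = 0) :
    ∀ k, k < N → A' ^ k *ᵥ x = ((-1 : ℂ) ^ k) • (A ^ k *ᵥ x) := by
  intro k
  induction k with
  | zero => intro _; simp
  | succ k ih =>
    intro hk
    have hk' : k < N := Nat.lt_of_succ_lt hk
    have hCw : C *ᵥ (A ^ k *ᵥ x) = 0 := by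
      rw [Matrix.mulVec_mulVec]; exact hx k hk'
    have h1 : A' ^ (k+1) *ᵥ x = A' *ᵥ (A' ^ k *ᵥ x) := by
      rw [pow_succ', ← Matrix.mulVec_mulVec]
    have h2 : A ^ (k+1) *ᵥ x = A *ᵥ (A ^ k *ᵥ x) := by
      rw [pow_succ', ← Matrix.mulVec_mulVec]
    rw [h1, h2, ih hk', Matrix.mulVec_smul, hA', Matrix.add_mulVec, Matrix.neg_mulVec,
      ← Matrix.mulVec_mulVec, hCw, Matrix.mulVec_zero, add_zero, pow_succ,
      ← smul_smul, neg_one_smul]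

lemma mem_iInf_ker {N : ℕ} (P : ℕ → Matrix κ ι ℂ) (x : ι → ℂ) :
    (x ∈ ⨅ k ∈ Finset.range N, LinearMap.ker ((P k).mulVecLin))
      ↔ ∀ k < N, (P k) *ᵥ x = 0 := by
  simp [Submodule.mem_iInf, LinearMap.mem_ker, Finset.mem_range]

lemma map_invol_biInf {H : Matrix ι ι ℂ} (hH : H * H = 1) {N : ℕ}
    (K : ℕ → Submodule ℂ (ι → ℂ)) :
    (⨅ k ∈ Finset.range N, Submodule.map H.mulVecLin (K k))
      = Submodule.map H.mulVecLin (⨅ k ∈ Finset.range N, K k) := by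
  ext x
  simp only [Submodule.mem_iInf, mem_map_invol hH]

end QLS

/-! ### System-specific duality lemmas -/

section Duality

open QLS

variable {n m : ℕ}

lemma duality_ctrb (𝒜 : Matrix (Fin n ⊕ Fin n) (Fin n ⊕ Fin n) ℂ)
    (ℬ : Matrix (Fin n ⊕ Fin n) (Fin m ⊕ Fin m) ℂ)
    (𝒞 : Matrix (Fin m ⊕ Fin m) (Fin n ⊕ Fin n) ℂ)
    (hkey : Jmat n * 𝒜ᴴ * Jmat n = -𝒜 + (-flat 𝒞) * 𝒞)
    (hB : ℬ = -flat 𝒞) :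
    orthComp (ctrbSub n m 𝒜 ℬ) = Submodule.map (Jmat n).mulVecLin (unobsSub n m 𝒜 𝒞) := by
  have hJ2 := Jmat_mul_Jmat n
  have hJm2 := Jmat_mul_Jmat m
  set A' : Matrix (Fin n ⊕ Fin n) (Fin n ⊕ Fin n) ℂ := -𝒜 + (-flat 𝒞) * 𝒞 with hA'def
  have hAH : 𝒜ᴴ = Jmat n * A' * Jmat n := by
    rw [← hkey]
    calc 𝒜ᴴ = (Jmat n * Jmat n) * 𝒜ᴴ * (Jmat n * Jmat n) := by
          rw [hJ2, Matrix.one_mul, Matrix.mul_one]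
      _ = Jmat n * (Jmat n * 𝒜ᴴ * Jmat n) * Jmat n := by simp only [Matrix.mul_assoc]
  have hBH : ℬᴴ = -(Jmat m * (𝒞 * Jmat n)) := by
    rw [hB]
    show (-(Jmat n * 𝒞ᴴ * Jmat m))ᴴ = _
    rw [Matrix.conjTranspose_neg, Matrix.conjTranspose_mul, Matrix.conjTranspose_mul,
      Jmat_conjTranspose, Jmat_conjTranspose, Matrix.conjTranspose_conjTranspose]
  have hMk : ∀ k : ℕ, ((𝒜 ^ k * ℬ)ᴴ) = -(Jmat m * (𝒞 * A' ^ k) * Jmat n) := by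
    intro k
    rw [Matrix.conjTranspose_mul, conjTranspose_pow, hAH, pow_conj_invol hJ2, hBH]
    rw [Matrix.neg_mul]
    congr 1
    calc Jmat m * (𝒞 * Jmat n) * (Jmat n * A' ^ k * Jmat n)
        = Jmat m * 𝒞 * ((Jmat n * Jmat n) * (A' ^ k * Jmat n)) := by
          simp only [Matrix.mul_assoc]
      _ = Jmat m * 𝒞 * (A' ^ k * Jmat n) := by rw [hJ2, Matrix.one_mul]
      _ = Jmat m * (𝒞 * A' ^ k) * Jmat n := by simp only [Matrix.mul_assoc]
  have step1 : orthComp (ctrbSub n m 𝒜 ℬ)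
      = ⨅ k ∈ Finset.range (2 * n), LinearMap.ker (((𝒜 ^ k * ℬ)ᴴ).mulVecLin) := by
    rw [ctrbSub, orthComp_biSup]
    exact iInf_congr fun k => iInf_congr fun _ => orthComp_range _
  have step2 : (⨅ k ∈ Finset.range (2 * n), LinearMap.ker (((𝒜 ^ k * ℬ)ᴴ).mulVecLin))
      = ⨅ k ∈ Finset.range (2 * n),
          Submodule.map (Jmat n).mulVecLin (LinearMap.ker ((𝒞 * A' ^ k).mulVecLin)) := by
    refine iInf_congr fun k => iInf_congr fun _ => ?_
    rw [hMk k, ker_sandwich hJm2 hJ2]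
  have step3 : (⨅ k ∈ Finset.range (2 * n), LinearMap.ker ((𝒞 * A' ^ k).mulVecLin))
      = unobsSub n m 𝒜 𝒞 := by
    rw [unobsSub]
    apply le_antisymm
    · intro x hx
      rw [mem_iInf_ker (fun k => 𝒞 * A' ^ k)] at hx
      rw [mem_iInf_ker (fun k => 𝒞 * 𝒜 ^ k)]
      intro k hk
      have hAeq : 𝒜 = -A' + (-flat 𝒞) * 𝒞 := by rw [hA'def]; abel
      have := ker_swap_aux hAeq x hx k hk
      rw [← Matrix.mulVec_mulVec, this, Matrix.mulVec_smul, Matrix.mulVec_mulVec,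
        hx k hk, smul_zero]
    · intro x hx
      rw [mem_iInf_ker (fun k => 𝒞 * 𝒜 ^ k)] at hx
      rw [mem_iInf_ker (fun k => 𝒞 * A' ^ k)]
      intro k hk
      have := ker_swap_aux hA'def x hx k hk
      rw [← Matrix.mulVec_mulVec, this, Matrix.mulVec_smul, Matrix.mulVec_mulVec,
        hx k hk, smul_zero]
  rw [step1, step2, map_invol_biInf hJ2, step3]

lemma duality_unobs (𝒜 : Matrix (Fin n ⊕ Fin n) (Fin n ⊕ Fin n) ℂ)
    (ℬ : Matrix (Fin n ⊕ Fin n) (Fin m ⊕ Fin m) ℂ)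
    (𝒞 : Matrix (Fin m ⊕ Fin m) (Fin n ⊕ Fin n) ℂ)
    (hkey : Jmat n * 𝒜ᴴ * Jmat n = -𝒜 + (-flat 𝒞) * 𝒞)
    (hB : ℬ = -flat 𝒞) :
    orthComp (unobsSub n m 𝒜 𝒞) = Submodule.map (Jmat n).mulVecLin (ctrbSub n m 𝒜 ℬ) := by
  have hJ2 := Jmat_mul_Jmat n
  have h1 := duality_ctrb 𝒜 ℬ 𝒞 hkey hB
  have h2 : unobsSub n m 𝒜 𝒞
      = Submodule.map (Jmat n).mulVecLin (orthComp (ctrbSub n m 𝒜 ℬ)) := by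
    rw [h1, map_invol_map hJ2]
  rw [h2, ← orthComp_map_invol (Jmat_conjTranspose n) hJ2, orthComp_orthComp]

end Duality

/-! ### The fixed-point real subspace -/

namespace QLS

def fixSub {α : Type} [Fintype α] (R : Submodule ℂ (α ⊕ α → ℂ)) :
    Submodule ℝ (α ⊕ α → ℂ) where
  carrier := {x | x ∈ R ∧ sig x = x}
  add_mem' := fun ha hb => ⟨R.add_mem ha.1 hb.1, by rw [sig_add, ha.2, hb.2]⟩
  zero_mem' := ⟨R.zero_mem, sig_zero⟩
  smul_mem' := by
    intro r x hx
    have hrx : r • x = (r : ℂ) • x := by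
      funext i
      simp [Complex.real_smul]
    exact ⟨by rw [hrx]; exact R.smul_mem _ hx.1,
      by rw [hrx, sig_smul, Complex.conj_ofReal, hx.2]⟩

lemma mem_fixSub {α : Type} [Fintype α] {R : Submodule ℂ (α ⊕ α → ℂ)} {x : α ⊕ α → ℂ} :
    x ∈ fixSub R ↔ x ∈ R ∧ sig x = x := Iff.rfl

lemma le_span_fixSub {α : Type} [Fintype α] (R : Submodule ℂ (α ⊕ α → ℂ))
    (hsig : ∀ x ∈ R, sig x ∈ R) {s : Set (α ⊕ α → ℂ)}
    (hs : ∀ x ∈ fixSub R, x ∈ Submodule.span ℂ s) :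
    R ≤ Submodule.span ℂ s := by
  intro x hx
  set p : α ⊕ α → ℂ := (1/2 : ℂ) • (x + sig x) with hp
  set q : α ⊕ α → ℂ := (-(Complex.I/2)) • (x - sig x) with hq
  have hxpq : x = p + Complex.I • q := by
    rw [hp, hq, smul_smul]
    have : Complex.I * -(Complex.I/2) = 1/2 := by
      rw [mul_neg, mul_div_assoc', Complex.I_mul_I]
      norm_num
    rw [this]
    funext i
    simp only [Pi.add_apply, Pi.smul_apply, Pi.sub_apply, smul_eq_mul]
    ring
  have hpF : p ∈ fixSub R := by
    refine ⟨Submodule.smul_mem _ _ (R.add_mem hx (hsig x hx)), ?_⟩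
    rw [hp, sig_smul, sig_add, sig_sig]
    have : starRingEnd ℂ (1/2 : ℂ) = 1/2 := by
      rw [show (1/2 : ℂ) = ((1/2 : ℝ) : ℂ) by norm_num, Complex.conj_ofReal]
    rw [this, add_comm]
  have hqF : q ∈ fixSub R := by
    refine ⟨Submodule.smul_mem _ _ (R.sub_mem hx (hsig x hx)), ?_⟩
    rw [hq, sig_smul]
    have h1 : starRingEnd ℂ (-(Complex.I/2)) = Complex.I/2 := by
      rw [map_neg, map_div₀, Complex.conj_I,
        show ((2:ℂ)) = ((2 : ℝ) : ℂ) by norm_num, Complex.conj_ofReal, neg_div, neg_neg]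
    rw [h1]
    have h2 : sig (x - sig x) = sig x - x := by
      rw [sig_sub, sig_sig]
    rw [h2]
    funext i
    simp only [Pi.smul_apply, Pi.sub_apply, smul_eq_mul]
    ring
  rw [hxpq]
  exact Submodule.add_mem _ (hs p hpF) (Submodule.smul_mem _ _ (hs q hqF))

/-- the key inner-product computation for `sig`-fixed vectors orthogonal to `J·(fixed)` -/
lemma dot_fix {n : ℕ} {u v : Fin n ⊕ Fin n → ℂ} (hu : sig u = u) (hv : sig v = v)
    (hJuv : star u ⬝ᵥ ((Jmat n) *ᵥ v) = 0) :
    (2 : ℂ) * (∑ k, starRingEnd ℂ (u (Sum.inl k)) * v (Sum.inl k)) = star u ⬝ᵥ v ∧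
      star u ⬝ᵥ v = (((star u ⬝ᵥ v).re : ℝ) : ℂ) := by
  set A := ∑ k, starRingEnd ℂ (u (Sum.inl k)) * v (Sum.inl k) with hA
  have hfixu : ∀ k, u (Sum.inr k) = starRingEnd ℂ (u (Sum.inl k)) := fun k =>
    (congrFun hu (Sum.inr k)).symm
  have hfixv : ∀ k, v (Sum.inr k) = starRingEnd ℂ (v (Sum.inl k)) := fun k =>
    (congrFun hv (Sum.inr k)).symm
  have hdot : star u ⬝ᵥ v = A + starRingEnd ℂ A := by
    have hL : ∑ k, (star u) (Sum.inl k) * v (Sum.inl k) = A := by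
      refine Finset.sum_congr rfl fun k _ => ?_
      rw [Pi.star_apply]
      rfl
    have hR : ∑ k, (star u) (Sum.inr k) * v (Sum.inr k) = starRingEnd ℂ A := by
      rw [map_sum]
      refine Finset.sum_congr rfl fun k _ => ?_
      rw [Pi.star_apply, hfixu k, hfixv k, _root_.map_mul]
      simp
    rw [dotProduct, Fintype.sum_sum_type, hL, hR]
  have hdotJ : star u ⬝ᵥ (Jmat n *ᵥ v) = A - starRingEnd ℂ A := by
    have h1 : ∀ l, (star u) l * (Jmat n *ᵥ v) l = starRingEnd ℂ (u l) * (sgn l * v l) :=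
      fun l => by rw [Pi.star_apply, Jmat_mulVec]; rfl
    have hL : ∑ k, starRingEnd ℂ (u (Sum.inl k)) * (sgn (Sum.inl k) * v (Sum.inl k)) = A := by
      refine Finset.sum_congr rfl fun k _ => ?_
      simp [sgn]
    have hR : ∑ k, starRingEnd ℂ (u (Sum.inr k)) * (sgn (Sum.inr k) * v (Sum.inr k))
        = -starRingEnd ℂ A := by
      rw [map_sum, ← Finset.sum_neg_distrib]
      refine Finset.sum_congr rfl fun k _ => ?_
      rw [hfixu k, hfixv k, _root_.map_mul]
      simp [sgn]
    rw [dotProduct]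
    simp only [h1]
    rw [Fintype.sum_sum_type, hL, hR, ← sub_eq_add_neg]
  have hAeq : starRingEnd ℂ A = A := by
    rw [hdotJ] at hJuv
    exact (sub_eq_zero.mp hJuv).symm
  constructor
  · rw [hdot, hAeq, two_mul]
  · have h2 : star u ⬝ᵥ v = ((2 * A.re : ℝ) : ℂ) := by
      rw [hdot]
      rw [show A + starRingEnd ℂ A = ((2 * A.re : ℝ) : ℂ) from Complex.add_conj A]
    rw [h2]
    simp

end QLS

/-! ### Construction of the adapted orthonormal basis -/

open QLS in
lemma main_construction {n : ℕ} (R : Submodule ℂ (Fin n ⊕ Fin n → ℂ))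
    (hsig : ∀ x ∈ R, QLS.sig x ∈ R)
    (hJR : ∀ u ∈ R, ∀ v ∈ R, star u ⬝ᵥ (Jmat n *ᵥ v) = 0) :
    ∃ (na : ℕ) (X : Matrix (Fin n) (Fin na) ℂ),
      Xᴴ * X = 1 ∧
      LinearMap.range ((((Real.sqrt 2 : ℂ))⁻¹ •
        Matrix.fromBlocks X (0 : Matrix (Fin n) (Fin 0) ℂ) (mconj X)
          (-(mconj (0 : Matrix (Fin n) (Fin 0) ℂ)))).mulVecLin) = R := by
  classical
  set eL := WithLp.linearEquiv 2 ℝ (Fin n ⊕ Fin n → ℂ) with heL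
  set F : Submodule ℝ (EucC (Fin n ⊕ Fin n)) :=
    Submodule.map eL.symm.toLinearMap (fixSub R) with hF
  set b := stdOrthonormalBasis ℝ ↥F with hb
  set na := Module.finrank ℝ ↥F with hna
  set u : Fin na → (Fin n ⊕ Fin n → ℂ) := fun j => eL ((b j : EucC (Fin n ⊕ Fin n))) with hu_def
  have hu : ∀ j, u j ∈ fixSub R := by
    intro j
    obtain ⟨y, hy, hyx⟩ := (b j).2
    have h1 : u j = y := by
      rw [hu_def]
      simp only
      rw [← hyx]
      exact eL.apply_symm_apply y
    rwa [h1]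
  have hfixu : ∀ j k, u j (Sum.inr k) = starRingEnd ℂ (u j (Sum.inl k)) := by
    intro j k
    exact (congrFun (hu j).2 (Sum.inr k)).symm
  set s2 : ℂ := ((Real.sqrt 2 : ℝ) : ℂ) with hs2def
  have hs2_ne : s2 ≠ 0 := by
    rw [hs2def]
    exact_mod_cast Complex.ofReal_ne_zero.mpr
      (ne_of_gt (Real.sqrt_pos.mpr (by norm_num)))
  have hs2_sq : s2 * s2 = 2 := by
    rw [hs2def, ← Complex.ofReal_mul, Real.mul_self_sqrt (by norm_num)]
    norm_num
  set X : Matrix (Fin n) (Fin na) ℂ := Matrix.of (fun i j => s2 * u j (Sum.inl i)) with hX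
  refine ⟨na, X, ?_, ?_⟩
  · -- XᴴX = 1
    ext i j
    have hd := dot_fix (hu i).2 (hu j).2 (hJR (u i) (hu i).1 (u j) (hu j).1)
    have hON : (star (u i) ⬝ᵥ u j).re = (if i = j then (1:ℝ) else 0) := by
      have hbON := orthonormal_iff_ite.mp b.orthonormal i j
      rw [Submodule.coe_inner, PiLp.inner_apply] at hbON
      calc (star (u i) ⬝ᵥ u j).re
          = ∑ k, ((starRingEnd ℂ) (u i k) * u j k).re := by
            rw [dotProduct, Complex.re_sum]
            rfl
        _ = ∑ k, (inner ℝ (((b i : EucC (Fin n ⊕ Fin n))) k)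
              (((b j : EucC (Fin n ⊕ Fin n))) k) : ℝ) := by
            exact Finset.sum_congr rfl fun k _ => by rw [Complex.inner, mul_comm]; rfl
        _ = (if i = j then (1:ℝ) else 0) := hbON
    have hentry : (Xᴴ * X) i j
        = 2 * ∑ k, starRingEnd ℂ (u i (Sum.inl k)) * u j (Sum.inl k) := by
      rw [Matrix.mul_apply, Finset.mul_sum]
      refine Finset.sum_congr rfl fun k _ => ?_
      rw [Matrix.conjTranspose_apply, hX]
      simp only [Matrix.of_apply]
      rw [star_mul']
      rw [show star s2 = s2 by rw [hs2def]; exact Complex.conj_ofReal _]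
      have : star (u i (Sum.inl k)) = starRingEnd ℂ (u i (Sum.inl k)) := rfl
      rw [this, ← hs2_sq]
      ring
    rw [hentry, hd.1, hd.2, hON, Matrix.one_apply]
    by_cases h : i = j <;> simp [h]
  · -- range
    have hTcol : ∀ j : Fin na,
        (((Real.sqrt 2 : ℂ))⁻¹ • Matrix.fromBlocks X (0 : Matrix (Fin n) (Fin 0) ℂ)
          (mconj X) (-(mconj (0 : Matrix (Fin n) (Fin 0) ℂ))))ᵀ (Sum.inl j) = u j := by
      intro j
      funext i
      have hc : ((Real.sqrt 2 : ℂ)) = s2 := rfl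
      cases i with
      | inl i =>
        show (((Real.sqrt 2 : ℂ))⁻¹ • Matrix.fromBlocks X 0 (mconj X) _) (Sum.inl i) (Sum.inl j)
          = u j (Sum.inl i)
        rw [Matrix.smul_apply, Matrix.fromBlocks_apply₁₁, hX]
        simp only [Matrix.of_apply, smul_eq_mul]
        rw [hc, ← mul_assoc, inv_mul_cancel₀ hs2_ne, one_mul]
      | inr i =>
        show (((Real.sqrt 2 : ℂ))⁻¹ • Matrix.fromBlocks X 0 (mconj X) _) (Sum.inr i) (Sum.inl j)
          = u j (Sum.inr i)
        rw [Matrix.smul_apply, Matrix.fromBlocks_apply₂₁, hX]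
        simp only [mconj, Matrix.map_apply, Matrix.of_apply, smul_eq_mul]
        rw [_root_.map_mul, show starRingEnd ℂ s2 = s2 by rw [hs2def]; exact Complex.conj_ofReal _]
        rw [hc, ← mul_assoc, inv_mul_cancel₀ hs2_ne, one_mul, hfixu]
    have hranges : Set.range (((Real.sqrt 2 : ℂ))⁻¹ • Matrix.fromBlocks X
        (0 : Matrix (Fin n) (Fin 0) ℂ) (mconj X)
        (-(mconj (0 : Matrix (Fin n) (Fin 0) ℂ))))ᵀ = Set.range u := by
      ext y
      constructor
      · rintro ⟨l, rfl⟩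
        cases l with
        | inl j => exact ⟨j, (hTcol j).symm⟩
        | inr j => exact Fin.elim0 j
      · rintro ⟨j, rfl⟩
        exact ⟨Sum.inl j, hTcol j⟩
    rw [Matrix.range_mulVecLin, Matrix.col, hranges]
    apply le_antisymm
    · refine Submodule.span_le.mpr ?_
      rintro y ⟨j, rfl⟩
      exact (hu j).1
    · refine le_span_fixSub R hsig ?_
      intro x hx
      have hxF : eL.symm x ∈ F := ⟨x, hx, rfl⟩
      set g : ↥F →ₗ[ℝ] (Fin n ⊕ Fin n → ℂ) := eL.toLinearMap ∘ₗ F.subtype with hg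
      have h1 : (⟨eL.symm x, hxF⟩ : ↥F) ∈ Submodule.span ℝ (Set.range ⇑(b.toBasis)) := by
        rw [Module.Basis.span_eq]
        exact Submodule.mem_top
      rw [b.coe_toBasis] at h1
      have h2 : g ⟨eL.symm x, hxF⟩ ∈ Submodule.span ℝ (⇑g '' Set.range ⇑b) :=
        Submodule.apply_mem_span_image_of_mem_span g h1
      have hgx : g ⟨eL.symm x, hxF⟩ = x := by
        rw [hg]
        simp only [LinearMap.coe_comp, Function.comp_apply, Submodule.coe_subtype,
          LinearEquiv.coe_coe]
        exact eL.apply_symm_apply x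
      have himg : ⇑g '' Set.range ⇑b = Set.range u := by
        rw [← Set.range_comp]
        rfl
      rw [hgx, himg] at h2
      have h3 : Submodule.span ℝ (Set.range u)
          ≤ (Submodule.span ℂ (Set.range u)).restrictScalars ℝ :=
        Submodule.span_le.mpr Submodule.subset_span
      exact h3 h2

/-! ### Main theorem -/


/-- **Lemma (basis of `R_cō` and `R_c̄o`).** For a general linear quantum system there exist
`n_a, n_b ≥ 0` and `X ∈ ℂ^{n×n_a}`, `Y ∈ ℂ^{n×n_b}` with `XᴴX = I`, `YᴴY = I`, `XᴴY = 0`,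
such that `T_cō = (1/√2)[X Y; conj X  -conj Y]` has column space `R_cō` and
`J_n T_cō` has column space `R_c̄o`. -/
theorem exists_basis_Rcnoo_Rnco
    (n m : ℕ) (hn : 0 < n) (hm : 0 < m)
    (Ωm Ωp : Matrix (Fin n) (Fin n) ℂ) (Cm Cp : Matrix (Fin m) (Fin n) ℂ)
    (Ω : Matrix (Fin n ⊕ Fin n) (Fin n ⊕ Fin n) ℂ) (hΩ : Ω = doubledUp Ωm Ωp)
    (hΩH : Ω.IsHermitian)
    (𝒞 : Matrix (Fin m ⊕ Fin m) (Fin n ⊕ Fin n) ℂ) (h𝒞 : 𝒞 = doubledUp Cm Cp)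
    (𝒜 : Matrix (Fin n ⊕ Fin n) (Fin n ⊕ Fin n) ℂ)
    (h𝒜 : 𝒜 = (-Complex.I) • (Jmat n * Ω) - (1 / 2 : ℂ) • (flat 𝒞 * 𝒞))
    (ℬ : Matrix (Fin n ⊕ Fin n) (Fin m ⊕ Fin m) ℂ) (hℬ : ℬ = -flat 𝒞) :
    ∃ (na nb : ℕ) (X : Matrix (Fin n) (Fin na) ℂ) (Y : Matrix (Fin n) (Fin nb) ℂ),
      Xᴴ * X = 1 ∧ Yᴴ * Y = 1 ∧ Xᴴ * Y = 0 ∧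
      LinearMap.range
          ((((Real.sqrt 2 : ℂ))⁻¹ •
            Matrix.fromBlocks X Y (mconj X) (-(mconj Y))).mulVecLin) =
        ctrbSub n m 𝒜 ℬ ⊓ unobsSub n m 𝒜 𝒞 ∧
      LinearMap.range
          ((Jmat n * ((((Real.sqrt 2 : ℂ))⁻¹ •
            Matrix.fromBlocks X Y (mconj X) (-(mconj Y))))).mulVecLin) =
        orthComp (ctrbSub n m 𝒜 ℬ) ⊓ orthComp (unobsSub n m 𝒜 𝒞) := by
  classical
  have hJ2 := QLS.Jmat_mul_Jmat n
  -- doubled-up structure of the system matrices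
  have hDC : QLS.DU 𝒞 := by rw [h𝒞]; exact QLS.DU_doubledUp Cm Cp
  have hDA : QLS.DU 𝒜 := by
    rw [h𝒜]
    refine QLS.DU.sub (QLS.DU.negI_smul_J_mul (by rw [hΩ]; exact QLS.DU_doubledUp Ωm Ωp)) ?_
    refine QLS.DU.smul_real (QLS.DU.mul (QLS.DU.flat' hDC) hDC) ?_
    rw [show ((1:ℂ)/2) = (((1:ℝ)/2 : ℝ) : ℂ) by norm_num, Complex.conj_ofReal]
  have hDB : QLS.DU ℬ := by rw [hℬ]; exact QLS.DU.neg (QLS.DU.flat' hDC)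
  -- the key flat-adjoint identity
  have hflat : flat 𝒞 = Jmat n * 𝒞ᴴ * Jmat m := rfl
  have hflatH : (flat 𝒞)ᴴ = Jmat m * (𝒞 * Jmat n) := by
    rw [hflat, Matrix.conjTranspose_mul, Matrix.conjTranspose_mul, QLS.Jmat_conjTranspose,
      QLS.Jmat_conjTranspose, Matrix.conjTranspose_conjTranspose]
  have hAH : 𝒜ᴴ = Complex.I • (Ω * Jmat n)
      - (1/2 : ℂ) • (𝒞ᴴ * (Jmat m * (𝒞 * Jmat n))) := by
    rw [h𝒜, Matrix.conjTranspose_sub, Matrix.conjTranspose_smul, Matrix.conjTranspose_smul,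
      Matrix.conjTranspose_mul, QLS.Jmat_conjTranspose, hΩH.eq, Matrix.conjTranspose_mul,
      hflatH]
    congr 1
    · congr 1
      simp
    · congr 1
      rw [show star ((1:ℂ)/2) = ((1:ℂ)/2) by
        rw [show ((1:ℂ)/2) = (((1:ℝ)/2 : ℝ) : ℂ) by norm_num]
        exact Complex.conj_ofReal _]
  have hkey : Jmat n * 𝒜ᴴ * Jmat n = -𝒜 + (-flat 𝒞) * 𝒞 := by
    have lhs : Jmat n * 𝒜ᴴ * Jmat n
        = Complex.I • (Jmat n * Ω) - (1/2:ℂ) • (flat 𝒞 * 𝒞) := by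
      rw [hAH, Matrix.mul_sub, Matrix.sub_mul, Matrix.mul_smul, Matrix.smul_mul,
        Matrix.mul_smul, Matrix.smul_mul]
      congr 1
      · congr 1
        calc Jmat n * (Ω * Jmat n) * Jmat n = Jmat n * Ω * (Jmat n * Jmat n) := by
              simp only [Matrix.mul_assoc]
          _ = Jmat n * Ω := by rw [hJ2, Matrix.mul_one]
      · congr 1
        calc Jmat n * (𝒞ᴴ * (Jmat m * (𝒞 * Jmat n))) * Jmat n
            = (Jmat n * 𝒞ᴴ * Jmat m) * 𝒞 * (Jmat n * Jmat n) := by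
              simp only [Matrix.mul_assoc]
          _ = flat 𝒞 * 𝒞 := by rw [hJ2, Matrix.mul_one, hflat]
    rw [lhs, h𝒜, Matrix.neg_mul]
    module
  -- dualities
  have hdual1 := duality_ctrb 𝒜 ℬ 𝒞 hkey hℬ
  have hdual2 := duality_unobs 𝒜 ℬ 𝒞 hkey hℬ
  set R : Submodule ℂ (Fin n ⊕ Fin n → ℂ) := ctrbSub n m 𝒜 ℬ ⊓ unobsSub n m 𝒜 𝒞 with hRdef
  -- sigma invariance
  have hsigc : ∀ x ∈ ctrbSub n m 𝒜 ℬ, QLS.sig x ∈ ctrbSub n m 𝒜 ℬ := by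
    intro x hx
    let SP : Submodule ℂ (Fin n ⊕ Fin n → ℂ) :=
      { carrier := {y | QLS.sig y ∈ ctrbSub n m 𝒜 ℬ}
        add_mem' := fun ha hb => by
          simp only [Set.mem_setOf_eq, QLS.sig_add] at *
          exact Submodule.add_mem _ ha hb
        zero_mem' := by
          simp only [Set.mem_setOf_eq, QLS.sig_zero]
          exact Submodule.zero_mem _
        smul_mem' := fun c y hy => by
          simp only [Set.mem_setOf_eq, QLS.sig_smul] at *
          exact Submodule.smul_mem _ _ hy }
    have hle : ctrbSub n m 𝒜 ℬ ≤ SP := by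
      rw [ctrbSub]
      refine iSup₂_le fun k hk => ?_
      rintro y ⟨v, rfl⟩
      show QLS.sig ((𝒜 ^ k * ℬ).mulVecLin v) ∈ ctrbSub n m 𝒜 ℬ
      have h1 : (𝒜 ^ k * ℬ).mulVecLin v = (𝒜 ^ k * ℬ) *ᵥ v := rfl
      rw [h1, QLS.DU.mulVec ((hDA.pow k).mul hDB)]
      have h2 : LinearMap.range ((𝒜 ^ k * ℬ).mulVecLin) ≤ ctrbSub n m 𝒜 ℬ :=
        le_iSup₂ (f := fun k (_ : k ∈ Finset.range (2*n)) =>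
          LinearMap.range ((𝒜 ^ k * ℬ).mulVecLin)) k hk
      exact h2 ⟨QLS.sig v, rfl⟩
    exact hle hx
  have hsigo : ∀ x ∈ unobsSub n m 𝒜 𝒞, QLS.sig x ∈ unobsSub n m 𝒜 𝒞 := by
    intro x hx
    rw [unobsSub, QLS.mem_iInf_ker (fun k => 𝒞 * 𝒜 ^ k)] at hx ⊢
    intro k hk
    rw [← QLS.DU.mulVec (hDC.mul (hDA.pow k)), hx k hk, QLS.sig_zero]
  have hsigR : ∀ x ∈ R, QLS.sig x ∈ R := by
    intro x hx
    rw [hRdef, Submodule.mem_inf] at hx ⊢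
    exact ⟨hsigc x hx.1, hsigo x hx.2⟩
  -- orthogonality of R and J·R
  have hJR : ∀ u ∈ R, ∀ v ∈ R, star u ⬝ᵥ (Jmat n *ᵥ v) = 0 := by
    intro u hu v hv
    have hvJ : Jmat n *ᵥ v ∈ orthComp (ctrbSub n m 𝒜 ℬ) := by
      rw [hdual1]
      exact ⟨v, (Submodule.mem_inf.mp hv).2, rfl⟩
    exact hvJ u (Submodule.mem_inf.mp hu).1
  -- construct the basis
  obtain ⟨na, X, hXX, hrange⟩ := main_construction R hsigR hJR
  refine ⟨na, 0, X, 0, hXX, ?_, ?_, ?_, ?_⟩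
  · ext i j
    exact Fin.elim0 i
  · ext i j
    exact Fin.elim0 j
  · exact hrange
  · rw [Matrix.mulVecLin_mul, LinearMap.range_comp, hrange, hRdef,
      QLS.map_invol_inf hJ2, ← hdual1, ← hdual2]
    exact inf_comm _ _

end
end

section
/- Let 𝒜 ∈ ℂ^{2n×2n}, ℬ ∈ ℂ^{2n×2m}, 𝒞 ∈ ℂ^{2m×2n} satisfy the physical realizability conditions 𝒜 + 𝒜♭ + ℬ ℬ♭ = 0 and ℬ = -𝒞♭. Let n₁ be a nonnegative integer, Z ∈ ℂ^{n×n₁} any matrix, and T := [Z 0; 0 conj(Z)] ∈ ℂ^{2n×2n₁}. Then the reduced matrices 𝒜' := Tᴴ 𝒜 T, ℬ' := Tᴴ ℬ, 𝒞' := 𝒞 T again satisfy the physical realizability conditions: ℬ' = -(𝒞')♭ and 𝒜' + (𝒜')♭ + ℬ' (ℬ')♭ = 0, where the ♭-adjoint of the primed matrices is taken with respect to J_{n₁} and J_m. -/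
open Matrix

noncomputable section

lemma Jmat_sq (k : ℕ) : Jmat k * Jmat k = 1 := by
  simp [Jmat, Matrix.fromBlocks_multiply, Matrix.fromBlocks_one]

lemma Jmat_herm (k : ℕ) : (Jmat k)ᴴ = Jmat k := by
  simp [Jmat, Matrix.fromBlocks_conjTranspose]

/-- **Physical realizability of the reduced `co` subsystem (Remark 2).** If
`𝒜 + 𝒜♭ + ℬℬ♭ = 0` and `ℬ = -𝒞♭`, then for any `Z ∈ ℂ^{n×n₁}` and
`T = [Z 0; 0 conj Z]`, the reduced matrices `𝒜' = Tᴴ𝒜T`, `ℬ' = Tᴴℬ`, `𝒞' = 𝒞T`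
again satisfy `ℬ' = -(𝒞')♭` and `𝒜' + (𝒜')♭ + ℬ'(ℬ')♭ = 0`. -/
theorem reduced_physical_realizability
    (n m n₁ : ℕ) (hn : 0 < n) (hm : 0 < m)
    (𝒜 : Matrix (Fin n ⊕ Fin n) (Fin n ⊕ Fin n) ℂ)
    (ℬ : Matrix (Fin n ⊕ Fin n) (Fin m ⊕ Fin m) ℂ)
    (𝒞 : Matrix (Fin m ⊕ Fin m) (Fin n ⊕ Fin n) ℂ)
    (hPR1 : 𝒜 + flat 𝒜 + ℬ * flat ℬ = 0) (hPR2 : ℬ = -flat 𝒞)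
    (Z : Matrix (Fin n) (Fin n₁) ℂ)
    (T : Matrix (Fin n ⊕ Fin n) (Fin n₁ ⊕ Fin n₁) ℂ)
    (hT : T = Matrix.fromBlocks Z 0 0 (mconj Z)) :
    Tᴴ * ℬ = -flat (𝒞 * T) ∧
    Tᴴ * 𝒜 * T + flat (Tᴴ * 𝒜 * T) + (Tᴴ * ℬ) * flat (Tᴴ * ℬ) = 0 := by
  subst hT
  set T := Matrix.fromBlocks Z 0 0 (mconj Z) with hT
  have hJT : Jmat n * T = T * Jmat n₁ := by
    simp [Jmat, hT, Matrix.fromBlocks_multiply]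
  have hJTH : Jmat n₁ * Tᴴ = Tᴴ * Jmat n := by
    have := congrArg Matrix.conjTranspose hJT
    simpa [Matrix.conjTranspose_mul, Jmat_herm] using this.symm
  have key1 : ∀ (X : Matrix (Fin m ⊕ Fin m) (Fin n ⊕ Fin n) ℂ),
      flat (X * T) = Tᴴ * flat X := by
    intro X
    have : flat (X * T) = Jmat n₁ * Tᴴ * (Xᴴ * Jmat m) := by
      simp [flat, Matrix.conjTranspose_mul, Matrix.mul_assoc]
    rw [this, hJTH]
    simp [flat, Matrix.mul_assoc]
  have key2 : flat (Tᴴ * ℬ) = flat ℬ * T := by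
    have : flat (Tᴴ * ℬ) = Jmat m * ℬᴴ * (T * Jmat n₁) := by
      simp [flat, Matrix.conjTranspose_mul, Matrix.mul_assoc]
    rw [this, ← hJT]
    simp [flat, ← Matrix.mul_assoc, Matrix.mul_assoc (Jmat m * ℬᴴ * Jmat n),
      Jmat_sq]
  have key3 : flat (Tᴴ * 𝒜 * T) = Tᴴ * flat 𝒜 * T := by
    have : flat (Tᴴ * 𝒜 * T) = Jmat n₁ * Tᴴ * 𝒜ᴴ * (T * Jmat n₁) := by
      simp [flat, Matrix.conjTranspose_mul, Matrix.mul_assoc]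
    rw [this, hJTH, ← hJT]
    have h2 : Tᴴ * Jmat n * 𝒜ᴴ * (Jmat n * T)
        = Tᴴ * (Jmat n * 𝒜ᴴ * Jmat n) * T := by
      simp [Matrix.mul_assoc]
    rw [h2]
    simp [flat]
  constructor
  · rw [key1, hPR2]
    simp [Matrix.mul_neg]
  · rw [key2, key3]
    have : Tᴴ * 𝒜 * T + Tᴴ * flat 𝒜 * T + Tᴴ * ℬ * (flat ℬ * T)
        = Tᴴ * (𝒜 + flat 𝒜 + ℬ * flat ℬ) * T := by
      simp [Matrix.mul_add, Matrix.add_mul, Matrix.mul_assoc]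
    rw [this, hPR1]
    simp


end
end
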